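/- Let u be a bounded C² solution of κ²u'' + u - u³ = 0 on ℝ whose conserved constant C = κ²(u')² + u² - u⁴/2 equals 0. Then u ≡ 0. -/

import Mathlib

lemma tri_aux {κ : ℝ} {u : ℝ → ℝ} (hC : ∀ x : ℝ, κ ^ 2 * (deriv u x) ^ 2 + (u x) ^ 2 - (u x) ^ 4 / 2 = 0)
    (x : ℝ) : u x = 0 ∨ 2 ≤ (u x) ^ 2 := by
  rcases eq_or_ne (u x) 0 with h | h
  · exact Or.inl h
  · right
    have h1 := hC x
    have h2 : 0 ≤ κ ^ 2 * (deriv u x) ^ 2 := by positivity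
    have h3 : 0 < (u x) ^ 2 := by positivity
    nlinarith [sq_nonneg (u x)]

lemma aux (κ : ℝ) (hκ : 0 < κ) (u : ℝ → ℝ)
    (hu : ContDiff ℝ 2 u)
    (hbdd : ∃ M : ℝ, ∀ x : ℝ, |u x| ≤ M)
    (heq : ∀ x : ℝ, κ ^ 2 * deriv (deriv u) x + u x - (u x) ^ 3 = 0)
    (hC : ∀ x : ℝ, κ ^ 2 * (deriv u x) ^ 2 + (u x) ^ 2 - (u x) ^ 4 / 2 = 0)
    (x₀ : ℝ) (hx₀ : 0 < u x₀) : False := by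
  obtain ⟨M, hM⟩ := hbdd
  have hcont : Continuous u := hu.continuous
  -- everywhere u ≥ 1
  have hge : ∀ x, 1 ≤ u x := by
    intro x
    by_contra hlt
    push_neg at hlt
    have hx : u x ≤ 0 := by
      rcases tri_aux hC x with h | h
      · linarith
      · nlinarith
    have hx0' : 1 ≤ u x₀ := by
      rcases tri_aux hC x₀ with h | h
      · linarith
      · nlinarith
    have hmem : (1/2 : ℝ) ∈ Set.uIcc (u x) (u x₀) := by
      rw [Set.mem_uIcc]; left; constructor <;> linarith
    obtain ⟨z, _, hz⟩ := intermediate_value_uIcc (hcont.continuousOn (s := Set.uIcc x x₀)) hmem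
    rcases tri_aux hC z with h | h <;> rw [hz] at h <;> norm_num at h
  have hdiff : Differentiable ℝ u := hu.differentiable (by norm_num)
  have hdu : ContDiff ℝ 1 (deriv u) := by
    have hu' : ContDiff ℝ (1 + 1) u := by
      rw [show ((1:WithTop ℕ∞) + 1) = 2 by norm_num]; exact hu
    exact (contDiff_succ_iff_deriv.mp hu').2.2
  have hdu' : Differentiable ℝ (deriv u) := hdu.differentiable (by norm_num)
  set c : ℝ := 1 / κ ^ 2 with hc
  have hcpos : 0 < c := by positivity
  have hdd : ∀ x, c ≤ deriv (deriv u) x := by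
    intro x
    have h1 := heq x
    have h2 := hge x
    have h3 : 2 ≤ (u x) ^ 2 := by
      rcases tri_aux hC x with h | h
      · linarith [hge x]
      · exact h
    have hκ2 : 0 < κ ^ 2 := by positivity
    rw [hc, div_le_iff₀ hκ2, mul_comm]
    nlinarith
  set b : ℝ := deriv u 0 with hb
  have hfd : ∀ x : ℝ, HasDerivAt (fun y => deriv u y - c * y) (deriv (deriv u) x - c) x := by
    intro x
    have h1 := (hdu'.differentiableAt (x := x)).hasDerivAt
    have h2 := (hasDerivAt_id x).const_mul c
    simpa using h1.fun_sub h2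
  have hf : Monotone (fun y => deriv u y - c * y) := by
    apply monotone_of_deriv_nonneg (fun x => (hfd x).differentiableAt)
    intro x
    rw [(hfd x).deriv]
    linarith [hdd x]
  have hf' : ∀ x, 0 ≤ x → b + c * x ≤ deriv u x := by
    intro x hx
    have h := hf hx
    simp only [mul_zero] at h
    linarith
  have hgd : ∀ x : ℝ, HasDerivAt (fun y => u y - b * y - c * y ^ 2 / 2)
      (deriv u x - b - c * x) x := by
    intro x
    have h1 := (hdiff.differentiableAt (x := x)).hasDerivAt
    have h2 := (hasDerivAt_id x).const_mul b
    have h3 := ((hasDerivAt_pow 2 x).const_mul c).div_const 2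
    have := (h1.fun_sub h2).fun_sub h3
    exact this.congr_deriv (by ring)
  have hg : MonotoneOn (fun y => u y - b * y - c * y ^ 2 / 2) (Set.Ici 0) := by
    apply monotoneOn_of_deriv_nonneg (convex_Ici 0)
    · exact fun x _ => (hgd x).continuousAt.continuousWithinAt
    · exact fun x _ => (hgd x).differentiableAt.differentiableWithinAt
    · intro x hx
      rw [interior_Ici] at hx
      rw [(hgd x).deriv]
      have := hf' x (le_of_lt hx)
      linarith
  have hM0 : 0 ≤ M := le_trans (abs_nonneg _) (hM 0)
  set X : ℝ := max 1 ((4*M + 2*|b| + 2)/c) with hX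
  have hX1 : 1 ≤ X := le_max_left _ _
  have hX0 : (0:ℝ) ≤ X := by linarith
  have hXc : 4*M + 2*|b| + 2 ≤ c * X := by
    calc 4*M + 2*|b| + 2 = c * ((4*M + 2*|b| + 2)/c) := by field_simp
    _ ≤ c * X := mul_le_mul_of_nonneg_left (le_max_right _ _) hcpos.le
  have hgX := hg (Set.self_mem_Ici (a := (0:ℝ))) (Set.mem_Ici.mpr hX0) hX0
  simp only [mul_zero, ne_eq, OfNat.ofNat_ne_zero, not_false_eq_true, zero_pow, zero_div,
    sub_zero] at hgX
  have hb1 : -|b| ≤ b := neg_abs_le b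
  have hu0 : -M ≤ u 0 := by have := abs_le.mp (hM 0); linarith [this.1]
  have huX : u X ≤ M := (abs_le.mp (hM X)).2
  nlinarith [mul_le_mul_of_nonneg_right hXc hX0, sq_nonneg X, abs_nonneg b,
    mul_le_mul_of_nonneg_right hb1 hX0]

/-- If `u` is a bounded C² solution of `κ²u'' + u - u³ = 0` on ℝ whose conserved
constant `κ²(u')² + u² - u⁴/2` equals `0`, then `u ≡ 0`. -/
theorem conserved_constant_zero_implies_trivial (κ : ℝ) (hκ : 0 < κ) (u : ℝ → ℝ)
    (hu : ContDiff ℝ 2 u)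
    (hbdd : ∃ M : ℝ, ∀ x : ℝ, |u x| ≤ M)
    (heq : ∀ x : ℝ, κ ^ 2 * deriv (deriv u) x + u x - (u x) ^ 3 = 0)
    (hC : ∀ x : ℝ, κ ^ 2 * (deriv u x) ^ 2 + (u x) ^ 2 - (u x) ^ 4 / 2 = 0) :
    ∀ x : ℝ, u x = 0 := by
  intro x
  by_contra hne
  rcases lt_or_gt_of_ne hne with h | h
  · -- u x < 0 : apply aux to -u
    have hneg : ∀ y : ℝ, deriv (fun t => -u t) y = -deriv u y := by
      intro y; rw [deriv.fun_neg]
    have hneg2 : ∀ y : ℝ, deriv (deriv (fun t => -u t)) y = -deriv (deriv u) y := by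
      intro y
      have : deriv (fun t => -u t) = fun t => -deriv u t := funext hneg
      rw [this, deriv.fun_neg]
    refine aux κ hκ (fun t => -u t) hu.neg ?_ ?_ ?_ x (by simpa using h)
    · obtain ⟨M, hM⟩ := hbdd; exact ⟨M, fun y => by simpa [abs_neg] using hM y⟩
    · intro y; rw [hneg2 y]; have := heq y; ring_nf; ring_nf at this; linarith
    · intro y; rw [hneg y]; have := hC y; ring_nf; ring_nf at this; linarith
  · exact aux κ hκ u hu hbdd heq hC x h
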